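/- For every nonnegative integer n, ∑_{i=0}^{n} Γ(n-i-1/2)Γ(n+i+3/2)/[Γ(n-i+1)Γ(n+i+3)] = −(1/2)·[Γ(n+1/2)/Γ(n+2)]². -/

import Mathlib

open Finset Real

noncomputable def cc (k : ℕ) : ℝ := (Nat.centralBinom k : ℝ) / ((2 * (k : ℝ) - 1) * 4 ^ k)

lemma two_k_sub_one_ne (k : ℕ) : (2 * (k : ℝ) - 1) ≠ 0 := by
  have h : ((2 * k : ℕ) : ℝ) ≠ 1 := by
    exact_mod_cast (by omega : 2 * k ≠ 1)
  push_cast at h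
  intro hc; apply h; linarith

lemma cc_succ (k : ℕ) : cc (k + 1) = (catalan k : ℝ) / (2 * 4 ^ k) := by
  have h1 : Nat.centralBinom (k + 1) = 2 * (2 * k + 1) * catalan k := by
    have h2 := Nat.succ_mul_centralBinom_succ k
    have h3 := succ_mul_catalan_eq_centralBinom k
    have : (k + 1) * Nat.centralBinom (k + 1) = (k + 1) * (2 * (2 * k + 1) * catalan k) := by
      rw [h2, ← h3]; ring
    exact Nat.eq_of_mul_eq_mul_left (by omega) this
  rw [cc, h1]
  have h4 : (2 * ((k : ℝ) + 1) - 1) = 2 * k + 1 := by ring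
  push_cast [h4]
  have h5 : (2 * (k : ℝ) + 1) ≠ 0 := by positivity
  field_simp
  ring

lemma gamma_half (k : ℕ) :
    Real.Gamma ((k : ℝ) - 1 / 2) = Real.sqrt π * (2 * cc k * (Nat.factorial k : ℝ)) := by
  induction k with
  | zero =>
    have h : Real.Gamma (-(1/2) + 1) = (-(1/2) : ℝ) * Real.Gamma (-(1/2)) :=
      Real.Gamma_add_one (by norm_num)
    have h2 : Real.Gamma (-(1/2) + 1) = Real.sqrt π := by
      norm_num [Real.Gamma_one_half_eq]
    rw [h2] at h
    have h3 : Real.Gamma (-(1/2) : ℝ) = -2 * Real.sqrt π := by linarith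
    have h4 : ((0:ℕ):ℝ) - 1/2 = -(1/2) := by norm_num
    have hcc0 : cc 0 = -1 := by simp [cc]
    rw [h4, h3, hcc0]
    simp
    ring
  | succ k ih =>
    have hne : ((k : ℝ) - 1 / 2) ≠ 0 := by
      have := two_k_sub_one_ne k
      intro hc; apply this; linarith
    have h : Real.Gamma (((k : ℝ) - 1/2) + 1) = ((k : ℝ) - 1/2) * Real.Gamma ((k : ℝ) - 1/2) :=
      Real.Gamma_add_one hne
    have harg : ((k + 1 : ℕ) : ℝ) - 1/2 = ((k : ℝ) - 1/2) + 1 := by push_cast; ring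
    rw [harg, h, ih]
    rw [cc_succ, cc]
    have h3 : Nat.centralBinom k = (k + 1) * catalan k := (succ_mul_catalan_eq_centralBinom k).symm
    rw [h3]
    have h5 : (2 * (k : ℝ) - 1) ≠ 0 := two_k_sub_one_ne k
    have h6 : (4 : ℝ) ^ k ≠ 0 := by positivity
    push_cast [Nat.factorial_succ]
    field_simp
    linear_combination (catalan k : ℝ) * (inv_mul_cancel₀ h5)

lemma conv_zero (n : ℕ) :
    ∑ k ∈ Finset.range (2 * n + 3), cc k * cc (2 * n + 2 - k) = 0 := by
  have hsplit : ∑ k ∈ Finset.range (2 * n + 3), cc k * cc (2 * n + 2 - k)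
      = cc 0 * cc (2 * n + 2) + ∑ j ∈ Finset.range (2 * n + 1), cc (j + 1) * cc (2 * n + 2 - (j + 1))
        + cc (2 * n + 2) * cc 0 := by
    rw [Finset.sum_range_succ' _ (2 * n + 2), Finset.sum_range_succ]
    simp [Nat.sub_self]
    ring
  rw [hsplit]
  have hmid : ∑ j ∈ Finset.range (2 * n + 1), cc (j + 1) * cc (2 * n + 2 - (j + 1))
      = ∑ j ∈ Finset.range (2 * n + 1), (catalan j : ℝ) / (2 * 4 ^ j) *
          ((catalan (2 * n - j) : ℝ) / (2 * 4 ^ (2 * n - j))) := by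
    apply Finset.sum_congr rfl
    intro j hj
    rw [Finset.mem_range] at hj
    have h1 : 2 * n + 2 - (j + 1) = (2 * n - j) + 1 := by omega
    rw [h1, cc_succ, cc_succ]
  rw [hmid]
  have hcat : ∑ j ∈ Finset.range (2 * n + 1), (catalan j : ℝ) * (catalan (2 * n - j) : ℝ)
      = (catalan (2 * n + 1) : ℝ) := by
    rw [catalan_succ (2 * n)]
    push_cast [← Finset.sum_range fun i => (catalan i : ℝ) * (catalan (2 * n - i) : ℝ)]
    rfl
  have hsum : ∑ j ∈ Finset.range (2 * n + 1), (catalan j : ℝ) / (2 * 4 ^ j) *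
      ((catalan (2 * n - j) : ℝ) / (2 * 4 ^ (2 * n - j)))
      = (catalan (2 * n + 1) : ℝ) / (4 * 4 ^ (2 * n)) := by
    rw [← hcat, Finset.sum_div]
    apply Finset.sum_congr rfl
    intro j hj
    rw [Finset.mem_range] at hj
    have h4 : (4 : ℝ) ^ j * 4 ^ (2 * n - j) = 4 ^ (2 * n) := by
      rw [← pow_add]; congr 1; omega
    rw [div_mul_div_comm]
    rw [div_eq_div_iff (by positivity) (by positivity)]
    rw [← h4]; ring
  rw [hsum]
  have h0 : cc 0 = -1 := by simp [cc, Nat.centralBinom]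
  have hlast : cc (2 * n + 2) = (catalan (2 * n + 1) : ℝ) / (2 * 4 ^ (2 * n + 1)) := cc_succ _
  rw [h0, hlast]
  have h6 : (4 : ℝ) ^ (2 * n) ≠ 0 := by positivity
  field_simp
  ring

theorem gamma_sum_identity_14 (n : ℕ) :
    ∑ i ∈ Finset.range (n + 1),
      Real.Gamma ((n : ℝ) - i - 1/2) * Real.Gamma ((n : ℝ) + i + 3/2) /
        (Real.Gamma ((n : ℝ) - i + 1) * Real.Gamma ((n : ℝ) + i + 3)) =
      -(1/2) * (Real.Gamma ((n : ℝ) + 1/2) / Real.Gamma ((n : ℝ) + 2)) ^ 2 := by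
  have hterm : ∀ i ∈ Finset.range (n + 1),
      Real.Gamma ((n : ℝ) - i - 1/2) * Real.Gamma ((n : ℝ) + i + 3/2) /
        (Real.Gamma ((n : ℝ) - i + 1) * Real.Gamma ((n : ℝ) + i + 3))
      = 4 * π * (cc (n - i) * cc (n + i + 2)) := by
    intro i hi
    rw [Finset.mem_range] at hi
    have hin : i ≤ n := by omega
    have e1 : (n : ℝ) - i - 1/2 = ((n - i : ℕ) : ℝ) - 1/2 := by
      push_cast [hin]; ring
    have e2 : (n : ℝ) + i + 3/2 = ((n + i + 2 : ℕ) : ℝ) - 1/2 := by push_cast; ring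
    have e3 : (n : ℝ) - i + 1 = ((n - i : ℕ) : ℝ) + 1 := by push_cast [hin]; ring
    have e4 : (n : ℝ) + i + 3 = ((n + i + 2 : ℕ) : ℝ) + 1 := by push_cast; ring
    rw [e1, e2, e3, e4, gamma_half, gamma_half, Real.Gamma_nat_eq_factorial,
      Real.Gamma_nat_eq_factorial]
    have f1 : ((n - i).factorial : ℝ) ≠ 0 := by positivity
    have f2 : ((n + i + 2).factorial : ℝ) ≠ 0 := by positivity
    have hs : Real.sqrt π * Real.sqrt π = π := Real.mul_self_sqrt Real.pi_pos.le
    rw [div_eq_iff (by positivity)]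
    linear_combination 4 * cc (n - i) * cc (n + i + 2) * ((n - i).factorial : ℝ) *
      ((n + i + 2).factorial : ℝ) * hs
  rw [Finset.sum_congr rfl hterm]
  have hT : ∑ i ∈ Finset.range (n + 1), 4 * π * (cc (n - i) * cc (n + i + 2))
      = 4 * π * ∑ i ∈ Finset.range (n + 1), cc (n - i) * cc (n + i + 2) := by
    rw [Finset.mul_sum]
  rw [hT]
  -- relate to conv_zero
  have hconv := conv_zero n
  have hsplit : ∑ k ∈ Finset.range (2 * n + 3), cc k * cc (2 * n + 2 - k)
      = (∑ i ∈ Finset.range (n + 1), cc (n - i) * cc (n + i + 2)) + cc (n + 1) * cc (n + 1)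
        + ∑ i ∈ Finset.range (n + 1), cc (n - i) * cc (n + i + 2) := by
    have h23 : 2 * n + 3 = (n + 2) + (n + 1) := by omega
    rw [h23, Finset.sum_range_add, Finset.sum_range_succ]
    congr 1
    · congr 1
      · rw [← Finset.sum_range_reflect]
        apply Finset.sum_congr rfl
        intro i hi
        rw [Finset.mem_range] at hi
        have : 2 * n + 2 - (n + 1 - 1 - i) = n + i + 2 := by omega
        rw [this]
        have : n + 1 - 1 - i = n - i := by omega
        rw [this]
      · have h1 : n + 2 - 1 = n + 1 := by omega
        have h2 : 2 * n + 2 - (n + 1) = n + 1 := by omega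
        rw [show (n + 1 : ℕ) = n + 1 from rfl, h2]
    · apply Finset.sum_congr rfl
      intro i hi
      rw [Finset.mem_range] at hi
      have h1 : n + 2 + i = (n + i + 2) := by omega
      rw [h1]
      have h2 : 2 * n + 2 - (n + i + 2) = n - i := by omega
      rw [h2]
      ring
  rw [hsplit] at hconv
  have hTval : ∑ i ∈ Finset.range (n + 1), cc (n - i) * cc (n + i + 2)
      = -(cc (n + 1) * cc (n + 1)) / 2 := by linarith
  rw [hTval]
  -- RHS
  have e5 : (n : ℝ) + 1/2 = ((n + 1 : ℕ) : ℝ) - 1/2 := by push_cast; ring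
  have e6 : (n : ℝ) + 2 = ((n + 1 : ℕ) : ℝ) + 1 := by push_cast; ring
  rw [e5, e6, gamma_half, Real.Gamma_nat_eq_factorial]
  have f3 : ((n + 1).factorial : ℝ) ≠ 0 := by positivity
  have hs : Real.sqrt π * Real.sqrt π = π := Real.mul_self_sqrt Real.pi_pos.le
  have hdiv : Real.sqrt π * (2 * cc (n + 1) * ((n + 1).factorial : ℝ)) / ((n + 1).factorial : ℝ)
      = Real.sqrt π * (2 * cc (n + 1)) := by
    field_simp
  rw [hdiv]
  linear_combination (2 * cc (n + 1) ^ 2) * hs
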